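/- Let A be an irreducible tridiagonal (d+1)×(d+1) matrix over a field F, and let E*_0 be the diagonal matrix with (0,0)-entry 1 and all other entries 0. Then the (d+1)^2 matrices {A^r E*_0 A^s : 0 ≤ r,s ≤ d} form a basis for the F-vector space Mat_{d+1}(F). -/

import Mathlib

theorem mycol {F : Type*} [Field F] {d : ℕ}
    (A : Matrix (Fin (d + 1)) (Fin (d + 1)) F)
    (htri : ∀ i j : Fin (d + 1), 1 < ((i : ℤ) - (j : ℤ)).natAbs → A i j = 0)
    (hirr : ∀ i j : Fin (d + 1), ((i : ℤ) - (j : ℤ)).natAbs = 1 → A i j ≠ 0)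
    (r : ℕ) :
    (∀ i : Fin (d + 1), r < (i : ℕ) → (A ^ r) i 0 = 0) ∧
    (∀ i : Fin (d + 1), (i : ℕ) = r → (A ^ r) i 0 ≠ 0) := by
  induction r with
  | zero =>
    constructor
    · intro i hi
      have : i ≠ 0 := by intro h; subst h; simp at hi
      simp [Matrix.one_apply_ne this]
    · intro i hi
      have : i = 0 := by ext; simpa using hi
      subst this; simp
  | succ r ih =>
    have hpow : A ^ (r + 1) = A * A ^ r := by rw [pow_succ']
    constructor
    · intro i hi
      rw [hpow, Matrix.mul_apply]
      apply Finset.sum_eq_zero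
      intro k _
      rcases lt_or_ge (r : ℕ) (k : ℕ) with h | h
      · rw [ih.1 k h, mul_zero]
      · have : A i k = 0 := by apply htri; omega
        rw [this, zero_mul]
    · intro i hi
      have hrd : r < d + 1 := by omega
      set k0 : Fin (d + 1) := ⟨r, hrd⟩ with hk0
      rw [hpow, Matrix.mul_apply]
      rw [Finset.sum_eq_single k0]
      · apply mul_ne_zero
        · apply hirr; simp [hk0]; omega
        · exact ih.2 k0 rfl
      · intro k _ hk
        have hkr : (k : ℕ) ≠ r := by
          intro h; apply hk; ext; simpa using h
        rcases lt_or_ge (r : ℕ) (k : ℕ) with h | h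
        · rw [ih.1 k h, mul_zero]
        · have : A i k = 0 := by apply htri; omega
          rw [this, zero_mul]
      · intro h; exact absurd (Finset.mem_univ k0) h

theorem stmt_2 {F : Type*} [Field F] {d : ℕ}
    (A : Matrix (Fin (d + 1)) (Fin (d + 1)) F)
    (htri : ∀ i j : Fin (d + 1), 1 < ((i : ℤ) - (j : ℤ)).natAbs → A i j = 0)
    (hirr : ∀ i j : Fin (d + 1), ((i : ℤ) - (j : ℤ)).natAbs = 1 → A i j ≠ 0)
    (Es0 : Matrix (Fin (d + 1)) (Fin (d + 1)) F)
    (hEs0 : Es0 = Matrix.single 0 0 1) :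
    LinearIndependent F
      (fun p : Fin (d + 1) × Fin (d + 1) => A ^ (p.1 : ℕ) * Es0 * A ^ (p.2 : ℕ)) ∧
    Submodule.span F
      (Set.range (fun p : Fin (d + 1) × Fin (d + 1) =>
        A ^ (p.1 : ℕ) * Es0 * A ^ (p.2 : ℕ))) = ⊤ := by
  subst hEs0
  -- transpose hypotheses
  have htri' : ∀ i j : Fin (d + 1), 1 < ((i : ℤ) - (j : ℤ)).natAbs → A.transpose i j = 0 := by
    intro i j h
    rw [Matrix.transpose_apply]
    exact htri j i (by omega)
  have hirr' : ∀ i j : Fin (d + 1), ((i : ℤ) - (j : ℤ)).natAbs = 1 → A.transpose i j ≠ 0 := by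
    intro i j h
    rw [Matrix.transpose_apply]
    exact hirr j i (by omega)
  have hcol := fun r => mycol A htri hirr r
  have hrow := fun r => mycol A.transpose htri' hirr' r
  set P : Matrix (Fin (d + 1)) (Fin (d + 1)) F :=
    Matrix.of fun i r => (A ^ (r : ℕ)) i 0 with hP
  set Q : Matrix (Fin (d + 1)) (Fin (d + 1)) F :=
    Matrix.of fun s j => (A ^ (s : ℕ)) 0 j with hQ
  -- determinants
  have hPdet : IsUnit P.det := by
    rw [Matrix.det_of_upperTriangular]
    · apply isUnit_iff_ne_zero.mpr
      apply Finset.prod_ne_zero_iff.mpr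
      intro i _
      exact (hcol (i : ℕ)).2 i rfl
    · intro i j hij
      exact (hcol (j : ℕ)).1 i hij
  have hQdet : IsUnit Q.det := by
    rw [Matrix.det_of_lowerTriangular]
    · apply isUnit_iff_ne_zero.mpr
      apply Finset.prod_ne_zero_iff.mpr
      intro i _
      have := (hrow (i : ℕ)).2 i rfl
      rw [← Matrix.transpose_pow, Matrix.transpose_apply] at this
      exact this
    · intro i j hij
      have := (hrow (i : ℕ)).1 j hij
      rw [← Matrix.transpose_pow, Matrix.transpose_apply] at this
      exact this
  -- the linear equivalence M ↦ P * M * Q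
  have hPP : P⁻¹ * P = 1 := Matrix.nonsing_inv_mul P hPdet
  have hPP' : P * P⁻¹ = 1 := Matrix.mul_nonsing_inv P hPdet
  have hQQ : Q⁻¹ * Q = 1 := Matrix.nonsing_inv_mul Q hQdet
  have hQQ' : Q * Q⁻¹ = 1 := Matrix.mul_nonsing_inv Q hQdet
  let e : Matrix (Fin (d + 1)) (Fin (d + 1)) F ≃ₗ[F] Matrix (Fin (d + 1)) (Fin (d + 1)) F :=
    { toFun := fun M => P * M * Q
      invFun := fun M => P⁻¹ * M * Q⁻¹
      map_add' := by intro M N; rw [Matrix.mul_add, Matrix.add_mul]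
      map_smul' := by intro c M; rw [Matrix.mul_smul, Matrix.smul_mul]; rfl
      left_inv := by
        intro M
        simp only []
        calc P⁻¹ * (P * M * Q) * Q⁻¹ = (P⁻¹ * P) * M * (Q * Q⁻¹) := by
              noncomm_ring
          _ = M := by rw [hPP, hQQ']; simp
      right_inv := by
        intro M
        simp only []
        calc P * (P⁻¹ * M * Q⁻¹) * Q = (P * P⁻¹) * M * (Q⁻¹ * Q) := by
              noncomm_ring
          _ = M := by rw [hPP', hQQ]; simp }
  let b := (Matrix.stdBasis F (Fin (d + 1)) (Fin (d + 1))).map e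
  have key : (fun p : Fin (d + 1) × Fin (d + 1) =>
      A ^ (p.1 : ℕ) * Matrix.single 0 0 1 * A ^ (p.2 : ℕ)) = ⇑b := by
    funext p
    have hb : b p = P * Matrix.single p.1 p.2 1 * Q := by
      simp only [b, Module.Basis.map_apply]
      rw [Matrix.stdBasis_eq_single]
      rfl
    rw [hb]
    ext i j
    rw [Matrix.mul_apply, Matrix.mul_apply]
    simp [Matrix.mul_apply, Matrix.single, Finset.sum_ite_eq, ite_and,
      Finset.sum_ite_eq', P, Q]
  rw [key]
  exact ⟨b.linearIndependent, b.span_eq⟩
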